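/- Let O be a shift orbit of indecomposable objects of C and let A_O be the Z[t,t^{-1}]-module generated by the classes of objects of O in A(C)^t, where t acts as the shift. Then A_O ≅ Z[t,t^{-1}] if O is infinite, and A_O ≅ Z[t,t^{-1}]/(t^n − 1) if O has size n. Moreover A(C)^t is the direct sum of the A_O over all shift orbits O. -/

import Mathlib

open CategoryTheory Limits Pretriangulated Module
open scoped Classical

set_option linter.unusedSectionVars false

noncomputable section

universe v u

variable {k : Type} [Field k] [IsAlgClosed k]
variable {C : Type u} [Category.{v} C] [Preadditive C] [CategoryTheory.Linear k C]
  [HasZeroObject C] [HasBinaryBiproducts C] [HasFiniteBiproducts C]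
  [HasShift C ℤ] [∀ n : ℤ, (CategoryTheory.shiftFunctor C n).Additive]
  [Pretriangulated C]
  [∀ X Y : C, FiniteDimensional k (X ⟶ Y)]

/-- An object is indecomposable if it is nonzero and admits no nontrivial
direct sum decomposition. -/
def Indec (W : C) : Prop :=
  ¬ IsZero W ∧ ∀ A B : C, Nonempty (W ≅ A ⊞ B) → IsZero A ∨ IsZero B

/-- The Krull-Schmidt property: indecomposables have local endomorphism rings
and every object is a finite direct sum of indecomposables. -/
def KrullSchmidt : Prop :=
  (∀ W : C, Indec W → ∀ f : W ⟶ W, IsIso f ∨ IsIso (𝟙 W - f)) ∧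
  (∀ X : C, ∃ (n : ℕ) (f : Fin n → C), (∀ i, Indec (f i)) ∧ Nonempty (X ≅ ⨁ f))

/-- An Auslander-Reiten triangle: a distinguished triangle with indecomposable
end terms, nonzero connecting map, such that every non-split-epi to the third
object factors through the middle (equivalently every non-split-mono out of the
first object factors through the middle). -/
def IsARTriangle (T : Triangle C) : Prop :=
  (T ∈ distTriang C) ∧ Indec T.obj₁ ∧ Indec T.obj₃ ∧ T.mor₃ ≠ 0 ∧
  (∀ (W : C) (f : W ⟶ T.obj₃), (¬ ∃ s : T.obj₃ ⟶ W, s ≫ f = 𝟙 T.obj₃) →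
    ∃ g : W ⟶ T.obj₂, g ≫ T.mor₂ = f) ∧
  (∀ (W : C) (f : T.obj₁ ⟶ W), (¬ ∃ s : W ⟶ T.obj₁, f ≫ s = 𝟙 T.obj₁) →
    ∃ g : T.obj₂ ⟶ W, T.mor₁ ≫ g = f)

/-- The set of isomorphism classes of indecomposable objects of `C`. -/
abbrev IndecCls (C : Type u) [Category.{v} C] [Preadditive C] [HasZeroObject C]
    [HasBinaryBiproducts C] : Type u :=
  {x : _root_.Quotient (CategoryTheory.isIsomorphicSetoid C) // ∃ W : C, Indec W ∧ ⟦W⟧ = x}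

/-- The Grothendieck group `A(C)`: the free abelian group on the isomorphism
classes of indecomposable objects of `C`, with only direct-sum relations. -/
abbrev GreenGroup (C : Type u) [Category.{v} C] [Preadditive C] [HasZeroObject C]
    [HasBinaryBiproducts C] : Type u :=
  FreeAbelianGroup (IndecCls C)

/-- The class `[W] ∈ A(C)` of an indecomposable object (and `0` otherwise). -/
def cls (W : C) : GreenGroup C :=
  if h : Indec W then FreeAbelianGroup.of (⟨⟦W⟧, W, h, rfl⟩ : IndecCls C) else 0

/-- The bilinear form on `A(C)` extending `⟨[C],[D]⟩ = dim Hom(C,D)`. -/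
def homPairing : GreenGroup C →+ GreenGroup C →+ ℤ :=
  FreeAbelianGroup.lift fun s : IndecCls C =>
    FreeAbelianGroup.lift fun t : IndecCls C =>
      (finrank k (Quotient.out (Subtype.val s) ⟶ Quotient.out (Subtype.val t)) : ℤ)

open scoped TensorProduct

/-- The ring `ℤ[t,t⁻¹]` of Laurent polynomials. -/
abbrev L := LaurentPolynomial ℤ

/-- The submodule of relations `1 ⊗ [M[i]] − tⁱ ⊗ [M]`. -/
def shiftRel : Submodule L (L ⊗[ℤ] GreenGroup C) :=
  Submodule.span L {x | ∃ (M : C) (i : ℤ),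
    x = (1 : L) ⊗ₜ[ℤ] cls (M⟦i⟧) - LaurentPolynomial.T i ⊗ₜ[ℤ] cls M}

/-- The extended Grothendieck group `A(C)^t = (ℤ[t,t⁻¹] ⊗ A(C))/I`, a module
over `ℤ[t,t⁻¹]` on which `t` acts as the shift. -/
def GreenGroupT :=
  (L ⊗[ℤ] GreenGroup C) ⧸ shiftRel (C := C)

instance : AddCommGroup (GreenGroupT (C := C)) := by unfold GreenGroupT; infer_instance
instance : Module L (GreenGroupT (C := C)) := by unfold GreenGroupT; infer_instance

/-- The class of an object of `C` in `A(C)^t`. -/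
def clsT (W : C) : GreenGroupT (C := C) :=
  Submodule.Quotient.mk ((1 : L) ⊗ₜ[ℤ] cls W)

/-- The `ℤ[t,t⁻¹]`-submodule `A_O` of `A(C)^t` spanned by the classes of
objects in the shift orbit of `M`. -/
def orbitSpan (M : C) : Submodule L (GreenGroupT (C := C)) :=
  Submodule.span L {x | ∃ (N : C) (i : ℤ), Nonempty (N ≅ M⟦i⟧) ∧ x = clsT N}


lemma indec_of_iso {W W' : C} (e : W ≅ W') (h : Indec W) : Indec W' :=
  ⟨fun hz => h.1 (hz.of_iso e), fun A B ⟨f⟩ => h.2 A B ⟨e ≪≫ f⟩⟩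

lemma isZero_shift {W : C} (i : ℤ) (h : IsZero W) : IsZero (W⟦i⟧) :=
  (shiftFunctor C i).map_isZero h

lemma indec_shift {W : C} (i : ℤ) (h : Indec W) : Indec (W⟦i⟧) := by
  constructor
  · intro hz
    exact h.1 ((isZero_shift (-i) hz).of_iso (shiftShiftNeg W i).symm)
  · rintro A B ⟨f⟩
    haveI : PreservesBinaryBiproducts (shiftFunctor C (-i)) :=
      preservesBinaryBiproducts_of_preservesBiproducts _
    have e : W ≅ A⟦-i⟧ ⊞ B⟦-i⟧ :=
      (shiftShiftNeg W i).symm ≪≫ (shiftFunctor C (-i)).mapIso f ≪≫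
        Functor.mapBiprod (shiftFunctor C (-i)) A B
    rcases h.2 _ _ ⟨e⟩ with hA | hB
    · exact Or.inl ((isZero_shift i hA).of_iso (shiftNegShift A i).symm)
    · exact Or.inr ((isZero_shift i hB).of_iso (shiftNegShift B i).symm)

lemma indec_shift_iff {W : C} (i : ℤ) : Indec (W⟦i⟧) ↔ Indec W :=
  ⟨fun h => indec_of_iso (shiftShiftNeg W i) (indec_shift (-i) h), indec_shift i⟩

lemma cls_iso {W W' : C} (e : W ≅ W') : cls W = cls W' := by
  unfold cls
  by_cases h : Indec W
  · rw [dif_pos h, dif_pos (indec_of_iso e h)]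
    congr 1
    exact Subtype.ext (Quotient.sound ⟨e⟩)
  · rw [dif_neg h, dif_neg (fun h' => h (indec_of_iso e.symm h'))]

lemma clsT_iso {W W' : C} (e : W ≅ W') : clsT W = clsT W' := by
  unfold clsT; rw [cls_iso e]

open LaurentPolynomial in
lemma clsT_shift (N : C) (i : ℤ) : clsT (N⟦i⟧) = (T i : L) • clsT N := by
  show (Submodule.Quotient.mk _ : (L ⊗[ℤ] GreenGroup C) ⧸ shiftRel (C := C)) =
    (T i : L) • (Submodule.Quotient.mk _ : (L ⊗[ℤ] GreenGroup C) ⧸ shiftRel (C := C))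
  rw [← Submodule.Quotient.mk_smul, TensorProduct.smul_tmul', smul_eq_mul, mul_one]
  rw [Submodule.Quotient.eq]
  exact Submodule.subset_span ⟨N, i, rfl⟩

section Orbits

open LaurentPolynomial

def shiftAddIso (X : C) (i j : ℤ) : X⟦i⟧⟦j⟧ ≅ X⟦i + j⟧ :=
  ((shiftFunctorAdd C i j).app X).symm

/-- From `X⟦i⟧ ≅ Y⟦j⟧` deduce `X ≅ Y⟦j - i⟧`. -/
def shiftCancel {X Y : C} (i j : ℤ) (e : X⟦i⟧ ≅ Y⟦j⟧) : X ≅ Y⟦j - i⟧ :=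
  (shiftShiftNeg X i).symm ≪≫ (shiftFunctor C (-i)).mapIso e ≪≫ shiftAddIso Y j (-i) ≪≫
    eqToIso (by rw [sub_eq_add_neg])

variable (ι : Type) (M : ι → C)

/-- The stabilizer of `M a` under the shift. -/
def StabG (a : ι) : AddSubgroup ℤ where
  carrier := {j | Nonempty ((M a)⟦j⟧ ≅ M a)}
  zero_mem' := ⟨(shiftFunctorZero C ℤ).app (M a)⟩
  add_mem' := fun {x y} ⟨e1⟩ ⟨e2⟩ =>
    ⟨(shiftAddIso (M a) x y).symm ≪≫ (shiftFunctor C y).mapIso e1 ≪≫ e2⟩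
  neg_mem' := fun {x} ⟨e⟩ => ⟨(shiftFunctor C (-x)).mapIso e.symm ≪≫ shiftShiftNeg (M a) x⟩

/-- The ideal of `L` generated by `T d - 1` for `d` in the stabilizer. -/
def Jdl (a : ι) : Ideal L :=
  Ideal.span ((fun d : ℤ => T d - 1) '' (StabG ι M a : Set ℤ))

lemma T_sub_one_mem {a : ι} {d : ℤ} (hd : Nonempty ((M a)⟦d⟧ ≅ M a)) :
    (T d - 1 : L) ∈ Jdl ι M a :=
  Ideal.subset_span ⟨d, hd, rfl⟩

abbrev QD := DirectSum ι (fun a => L ⧸ Jdl ι M a)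

def rep (s : IndecCls C) : C := s.2.choose

lemma rep_indec (s : IndecCls C) : Indec (rep s) := s.2.choose_spec.1

lemma rep_cls (s : IndecCls C) : ⟦rep s⟧ = s.1 := s.2.choose_spec.2

lemma rep_iso {N : C} (hN : Indec N) : Nonempty (rep (⟨⟦N⟧, N, hN, rfl⟩ : IndecCls C) ≅ N) :=
  Quotient.exact (rep_cls (⟨⟦N⟧, N, hN, rfl⟩ : IndecCls C))

lemma cls_eq_of (s : IndecCls C) : cls (rep s) = FreeAbelianGroup.of s := by
  unfold cls
  rw [dif_pos (rep_indec s)]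
  congr 1
  exact Subtype.ext (rep_cls s)

variable (hcover : ∀ N : C, Indec N → ∃ (a : ι) (j : ℤ), Nonempty (N ≅ (M a)⟦j⟧))

def oIdx (s : IndecCls C) : ι := (hcover (rep s) (rep_indec s)).choose

def oSh (s : IndecCls C) : ℤ := (hcover (rep s) (rep_indec s)).choose_spec.choose

lemma oSpec (s : IndecCls C) :
    Nonempty (rep s ≅ (M (oIdx ι M hcover s))⟦oSh ι M hcover s⟧) :=
  (hcover (rep s) (rep_indec s)).choose_spec.choose_spec

def psi0 : GreenGroup C →+ QD ι M :=
  FreeAbelianGroup.lift fun s : IndecCls C =>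
    DirectSum.lof L ι (fun a => L ⧸ Jdl ι M a) (oIdx ι M hcover s)
      (Submodule.Quotient.mk (T (oSh ι M hcover s)))

def Psi : L ⊗[ℤ] GreenGroup C →ₗ[L] QD ι M :=
  LinearMap.liftBaseChange L (psi0 ι M hcover).toIntLinearMap

variable (hdisj : ∀ a b : ι, (∃ j : ℤ, Nonempty (M a ≅ (M b)⟦j⟧)) → a = b)

include hdisj in
lemma keyRaw {N : C} (hN : Indec N) (a : ι) (i : ℤ) (e : N ≅ (M a)⟦i⟧) :
    psi0 ι M hcover (cls N) =
      DirectSum.lof L ι (fun b => L ⧸ Jdl ι M b) a (Submodule.Quotient.mk (T i)) := by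
  set s : IndecCls C := ⟨⟦N⟧, N, hN, rfl⟩ with hs
  have h1 : cls N = FreeAbelianGroup.of s := dif_pos hN
  rw [h1]
  have h2 : psi0 ι M hcover (FreeAbelianGroup.of s) =
      DirectSum.lof L ι (fun b => L ⧸ Jdl ι M b) (oIdx ι M hcover s)
        (Submodule.Quotient.mk (T (oSh ι M hcover s))) :=
    FreeAbelianGroup.lift_apply_of _ _
  rw [h2]
  obtain ⟨e1⟩ := rep_iso hN
  obtain ⟨e2⟩ := oSpec ι M hcover s
  have e3 : (M (oIdx ι M hcover s))⟦oSh ι M hcover s⟧ ≅ (M a)⟦i⟧ := e2.symm ≪≫ e1 ≪≫ e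
  have e4 : M (oIdx ι M hcover s) ≅ (M a)⟦i - oSh ι M hcover s⟧ := shiftCancel _ _ e3
  have ha : oIdx ι M hcover s = a := hdisj _ _ ⟨_, ⟨e4⟩⟩
  subst ha
  congr 1
  rw [Submodule.Quotient.eq]
  have hmem : (T (i - oSh ι M hcover s) - 1 : L) ∈ Jdl ι M (oIdx ι M hcover s) :=
    T_sub_one_mem ι M ⟨e4.symm⟩
  have hcalc : (T (oSh ι M hcover s) - T i : L) =
      (-T (oSh ι M hcover s)) * (T (i - oSh ι M hcover s) - 1) := by
    have : (T (oSh ι M hcover s) * T (i - oSh ι M hcover s) : L) = T i := by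
      rw [← T_add]
      congr 1
      ring
    rw [neg_mul, mul_sub, mul_one, this]
    ring
  rw [hcalc]
  exact Ideal.mul_mem_left _ _ hmem

include hdisj in
lemma PsiWellDef : shiftRel (C := C) ≤ LinearMap.ker (Psi ι M hcover) := by
  rw [shiftRel, Submodule.span_le]
  rintro x ⟨N, i, rfl⟩
  rw [SetLike.mem_coe, LinearMap.mem_ker, map_sub, sub_eq_zero]
  have hl : Psi ι M hcover ((1 : L) ⊗ₜ[ℤ] cls (N⟦i⟧)) = psi0 ι M hcover (cls (N⟦i⟧)) := by
    rw [Psi, LinearMap.liftBaseChange_tmul, one_smul]; rfl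
  have hr : Psi ι M hcover (T i ⊗ₜ[ℤ] cls N) = (T i : L) • psi0 ι M hcover (cls N) := by
    rw [Psi, LinearMap.liftBaseChange_tmul]; rfl
  rw [hl, hr]
  by_cases hN : Indec N
  · obtain ⟨a, j, ⟨e⟩⟩ := hcover N hN
    have e' : N⟦i⟧ ≅ (M a)⟦j + i⟧ :=
      (shiftFunctor C i).mapIso e ≪≫ shiftAddIso (M a) j i
    rw [keyRaw ι M hcover hdisj (indec_shift i hN) a (j + i) e',
      keyRaw ι M hcover hdisj hN a j e, ← map_smul]
    congr 1
    rw [← Submodule.Quotient.mk_smul, smul_eq_mul, ← T_add, add_comm]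
  · have hN' : ¬ Indec (N⟦i⟧) := fun h => hN ((indec_shift_iff i).mp h)
    simp only [cls, dif_neg hN, dif_neg hN', map_zero, smul_zero]

def Phi : GreenGroupT (C := C) →ₗ[L] QD ι M :=
  Submodule.liftQ (R := L) (M := L ⊗[ℤ] GreenGroup C) (M₂ := QD ι M) (τ₁₂ := RingHom.id L)
    (shiftRel (C := C)) (Psi ι M hcover) (PsiWellDef ι M hcover hdisj)

include hdisj in
lemma keyPhi {N : C} (hN : Indec N) (a : ι) (i : ℤ) (e : N ≅ (M a)⟦i⟧) :
    Phi ι M hcover hdisj (clsT N) =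
      DirectSum.lof L ι (fun b => L ⧸ Jdl ι M b) a (Submodule.Quotient.mk (T i)) := by
  have : Phi ι M hcover hdisj (clsT N) = Psi ι M hcover ((1 : L) ⊗ₜ[ℤ] cls N) :=
    Submodule.liftQ_apply _ _ _
  rw [this, Psi, LinearMap.liftBaseChange_tmul, one_smul]
  exact keyRaw ι M hcover hdisj hN a i e

lemma smul_clsT_mem_ker {a : ι} :
    Jdl ι M a ≤ LinearMap.ker (LinearMap.toSpanSingleton L (GreenGroupT (C := C)) (clsT (M a))) := by
  rw [Jdl, Ideal.span_le]
  rintro x ⟨d, hd, rfl⟩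
  rw [SetLike.mem_coe, LinearMap.mem_ker, LinearMap.toSpanSingleton_apply, sub_smul, one_smul,
    ← clsT_shift, sub_eq_zero]
  obtain ⟨e⟩ := hd
  exact clsT_iso e

def sigma : QD ι M →ₗ[L] GreenGroupT (C := C) :=
  DirectSum.toModule L ι _ fun a =>
    Submodule.liftQ (Jdl ι M a)
      (LinearMap.toSpanSingleton L (GreenGroupT (C := C)) (clsT (M a)))
      (smul_clsT_mem_ker ι M)

lemma sigma_lof (a : ι) (p : L) :
    sigma ι M (DirectSum.lof L ι (fun b => L ⧸ Jdl ι M b) a (Submodule.Quotient.mk p)) =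
      p • clsT (M a) := by
  rw [sigma, DirectSum.toModule_lof, Submodule.liftQ_apply, LinearMap.toSpanSingleton_apply]

variable (hM : ∀ a, Indec (M a))

include hdisj hM in
lemma Phi_sigma :
    (Phi ι M hcover hdisj) ∘ₗ (sigma ι M) = LinearMap.id := by
  refine DirectSum.linearMap_ext _ fun a => ?_
  refine Submodule.linearMap_qext (R := L) (M := L) (M₂ := QD ι M) (τ₁₂ := RingHom.id L)
    (Jdl ι M a) ?_
  refine LinearMap.ext_ring ?_
  simp only [LinearMap.comp_apply, Submodule.mkQ_apply, LinearMap.id_apply]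
  rw [sigma_lof ι M a 1, one_smul,
    keyPhi ι M hcover hdisj (hM a) a 0 ((shiftFunctorZero C ℤ).app (M a)).symm, T_zero]

include hdisj in
lemma sigma_Phi_aux (g : GreenGroup C) :
    sigma ι M (Psi ι M hcover ((1 : L) ⊗ₜ[ℤ] g)) =
      Submodule.Quotient.mk ((1 : L) ⊗ₜ[ℤ] g) := by
  induction g using FreeAbelianGroup.induction_on with
  | zero => simp only [TensorProduct.tmul_zero, map_zero, Submodule.Quotient.mk_zero]; rfl
  | of s =>
    have h1 : Psi ι M hcover ((1 : L) ⊗ₜ[ℤ] FreeAbelianGroup.of s) =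
        psi0 ι M hcover (FreeAbelianGroup.of s) := by
      rw [Psi, LinearMap.liftBaseChange_tmul, one_smul]; rfl
    rw [h1]
    have h2 : psi0 ι M hcover (FreeAbelianGroup.of s) =
        DirectSum.lof L ι (fun b => L ⧸ Jdl ι M b) (oIdx ι M hcover s)
          (Submodule.Quotient.mk (T (oSh ι M hcover s))) := FreeAbelianGroup.lift_apply_of _ _
    rw [h2, sigma_lof, ← clsT_shift]
    obtain ⟨e2⟩ := oSpec ι M hcover s
    rw [← clsT_iso e2]
    show clsT (rep s) = _
    rw [clsT, cls_eq_of]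
  | neg s h =>
    rw [TensorProduct.tmul_neg, map_neg, map_neg, h]; exact (Submodule.Quotient.mk_neg ..).symm
  | add x y hx hy =>
    rw [TensorProduct.tmul_add, map_add, map_add, hx, hy]; exact (Submodule.Quotient.mk_add ..).symm

include hdisj in
lemma sigma_Phi :
    (sigma ι M) ∘ₗ (Phi ι M hcover hdisj) = LinearMap.id := by
  refine Submodule.linearMap_qext _ (LinearMap.ext fun x => ?_)
  show sigma ι M (Psi ι M hcover x) = Submodule.Quotient.mk x
  induction x using TensorProduct.induction_on with
  | zero => simp only [map_zero, Submodule.Quotient.mk_zero]; rfl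
  | tmul p g =>
    have : (p ⊗ₜ[ℤ] g : L ⊗[ℤ] GreenGroup C) = p • ((1 : L) ⊗ₜ[ℤ] g) := by
      rw [TensorProduct.smul_tmul', smul_eq_mul, mul_one]
    rw [this, map_smul, map_smul, sigma_Phi_aux ι M hcover hdisj g,
      Submodule.Quotient.mk_smul]; rfl
  | add x y hx hy =>
    rw [map_add, map_add, hx, hy, Submodule.Quotient.mk_add]; rfl

include hdisj hM in
def PhiEquiv : GreenGroupT (C := C) ≃ₗ[L] QD ι M :=
  LinearEquiv.ofLinear (Phi ι M hcover hdisj) (sigma ι M)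
    (Phi_sigma ι M hcover hdisj hM) (sigma_Phi ι M hcover hdisj)

include hdisj hM in
lemma mapOrbit (a : ι) :
    Submodule.map (PhiEquiv ι M hcover hdisj hM : GreenGroupT (C := C) →ₗ[L] QD ι M)
      (orbitSpan (M a)) =
        LinearMap.range (DirectSum.lof L ι (fun b => L ⧸ Jdl ι M b) a) := by
  apply le_antisymm
  · rw [orbitSpan, Submodule.map_span_le]
    rintro x ⟨N, i, ⟨e⟩, rfl⟩
    have hN : Indec N := indec_of_iso e.symm (indec_shift i (hM a))
    have hk : (PhiEquiv ι M hcover hdisj hM : GreenGroupT (C := C) →ₗ[L] QD ι M) (clsT N) =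
        DirectSum.lof L ι (fun b => L ⧸ Jdl ι M b) a (Submodule.Quotient.mk (T i)) :=
      keyPhi ι M hcover hdisj hN a i e
    rw [hk]
    exact LinearMap.mem_range_self _ _
  · rintro x ⟨q, rfl⟩
    obtain ⟨p, rfl⟩ := Submodule.Quotient.mk_surjective _ q
    refine Submodule.mem_map.mpr ⟨p • clsT (M a), ?_, ?_⟩
    · exact Submodule.smul_mem _ p (Submodule.subset_span
        ⟨M a, 0, ⟨((shiftFunctorZero C ℤ).app (M a)).symm⟩, rfl⟩)
    · have hk : (PhiEquiv ι M hcover hdisj hM : GreenGroupT (C := C) →ₗ[L] QD ι M)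
          (clsT (M a)) =
          DirectSum.lof L ι (fun b => L ⧸ Jdl ι M b) a (Submodule.Quotient.mk (T 0)) :=
        keyPhi ι M hcover hdisj (hM a) a 0 ((shiftFunctorZero C ℤ).app (M a)).symm
      rw [map_smul, hk, T_zero, ← map_smul, ← Submodule.Quotient.mk_smul, smul_eq_mul, mul_one]

lemma lof_inj (a : ι) :
    Function.Injective (DirectSum.lof L ι (fun b => L ⧸ Jdl ι M b) a) := fun x y hxy => by
  have := congrArg (DirectSum.component L ι (fun b => L ⧸ Jdl ι M b) a) hxy
  rwa [DirectSum.component.lof_self, DirectSum.component.lof_self] at this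

include hdisj hM in
def orbitEquiv (a : ι) : orbitSpan (M a) ≃ₗ[L] (L ⧸ Jdl ι M a) :=
  ((PhiEquiv ι M hcover hdisj hM).submoduleMap (orbitSpan (M a))) ≪≫ₗ
    (LinearEquiv.ofEq _ _ (mapOrbit ι M hcover hdisj hM a)) ≪≫ₗ
      (LinearEquiv.ofInjective _ (lof_inj ι M a)).symm

lemma Jdl_eq_bot (a : ι) (h : ∀ i j : ℤ, Nonempty ((M a)⟦i⟧ ≅ (M a)⟦j⟧) → i = j) :
    Jdl ι M a = ⊥ := by
  rw [Jdl, Ideal.span_eq_bot]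
  rintro x ⟨d, hd, rfl⟩
  obtain ⟨e⟩ := hd
  have hd0 : d = (0 : ℤ) := h d 0 ⟨e ≪≫ ((shiftFunctorZero C ℤ).app (M a)).symm⟩
  rw [hd0]
  show (T (0 : ℤ) - 1 : L) = 0
  rw [T_zero, sub_self]

lemma Jdl_eq_span (a : ι) (n : ℕ) (hn0 : 0 < n) (hn : Nonempty ((M a)⟦(n : ℤ)⟧ ≅ M a))
    (hno : ∀ j : ℤ, 0 < j → j < n → ¬ Nonempty ((M a)⟦j⟧ ≅ M a)) :
    Jdl ι M a = Ideal.span {(T (n : ℤ) - 1 : L)} := by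
  have key : ∀ c : ℕ, (T ((n : ℤ) * c) - 1 : L) ∈ Ideal.span {(T (n : ℤ) - 1 : L)} := by
    intro c
    induction c with
    | zero => simp
    | succ c ih =>
      have h1 : ((n : ℤ) * ((c : ℕ) + 1 : ℕ)) = (n : ℤ) * c + n := by push_cast; ring
      rw [h1, T_add]
      have h2 : (T ((n : ℤ) * c) * T (n : ℤ) - 1 : L) =
          T ((n : ℤ) * c) * (T (n : ℤ) - 1) + (T ((n : ℤ) * c) - 1) := by ring
      rw [h2]
      exact Ideal.add_mem _ (Ideal.mul_mem_left _ _ (Ideal.subset_span (Set.mem_singleton _))) ih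
  have hTn : ∀ c : ℤ, (T ((n : ℤ) * c) - 1 : L) ∈ Ideal.span {(T (n : ℤ) - 1 : L)} := by
    intro c
    rcases c.eq_nat_or_neg with ⟨m, rfl | rfl⟩
    · exact key m
    · have h1 : ((n : ℤ) * (-(m : ℤ))) = -((n : ℤ) * m) := by ring
      rw [h1]
      have h2 : (T (-((n : ℤ) * m)) - 1 : L) =
          (-T (-((n : ℤ) * m))) * (T ((n : ℤ) * m) - 1) := by
        rw [neg_mul, mul_sub, mul_one, ← T_add, neg_add_cancel, T_zero]
        ring
      rw [h2]
      exact Ideal.mul_mem_left _ _ (key m)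
  apply le_antisymm
  · rw [Jdl, Ideal.span_le]
    rintro x ⟨d, hd, rfl⟩
    have hdvd : (n : ℤ) ∣ d := by
      have hmem : d % (n : ℤ) ∈ StabG ι M a := by
        have h1 : d % (n : ℤ) = d - (n : ℤ) * (d / n) := by rw [Int.emod_def]
        rw [h1]
        refine AddSubgroup.sub_mem _ hd ?_
        have := AddSubgroup.zsmul_mem (StabG ι M a) (show (n : ℤ) ∈ StabG ι M a from hn) (d / n)
        rwa [smul_eq_mul, mul_comm] at this
      have h0 : 0 ≤ d % (n : ℤ) := Int.emod_nonneg d (by exact_mod_cast hn0.ne')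
      have hlt : d % (n : ℤ) < n := Int.emod_lt_of_pos d (by exact_mod_cast hn0)
      rcases h0.lt_or_eq with hpos | heq
      · exact absurd hmem (hno _ hpos hlt)
      · exact Int.dvd_of_emod_eq_zero heq.symm
    obtain ⟨c, rfl⟩ := hdvd
    exact hTn c
  · rw [Ideal.span_le, Set.singleton_subset_iff]
    exact T_sub_one_mem ι M hn

include hcover hdisj hM in
lemma orbit_indep : iSupIndep (fun a : ι => orbitSpan (M a)) := by
  intro a
  rw [Submodule.disjoint_def]
  intro x hxa hxs
  set Φl : GreenGroupT (C := C) →ₗ[L] QD ι M :=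
    (PhiEquiv ι M hcover hdisj hM : GreenGroupT (C := C) →ₗ[L] QD ι M) with hΦl
  have h1 : Φl x ∈ LinearMap.range (DirectSum.lof L ι (fun b => L ⧸ Jdl ι M b) a) := by
    rw [← mapOrbit ι M hcover hdisj hM a]
    exact Submodule.mem_map_of_mem hxa
  have hmap : Submodule.map Φl (⨆ b, ⨆ _ : b ≠ a, orbitSpan (M b)) =
      ⨆ b, ⨆ _ : b ≠ a, LinearMap.range (DirectSum.lof L ι (fun b => L ⧸ Jdl ι M b) b) := by
    simp_rw [Submodule.map_iSup]
    congr 1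
    funext b
    congr 1
    funext hb
    exact mapOrbit ι M hcover hdisj hM b
  have h2 : Φl x ∈ ⨆ b, ⨆ _ : b ≠ a,
      LinearMap.range (DirectSum.lof L ι (fun b => L ⧸ Jdl ι M b) b) := by
    rw [← hmap]
    exact Submodule.mem_map_of_mem hxs
  have hle : (⨆ b, ⨆ _ : b ≠ a,
      LinearMap.range (DirectSum.lof L ι (fun b => L ⧸ Jdl ι M b) b)) ≤
      LinearMap.ker (DirectSum.component L ι (fun b => L ⧸ Jdl ι M b) a) := by
    refine iSup_le fun b => iSup_le fun hb => ?_
    rintro _ ⟨v, rfl⟩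
    rw [LinearMap.mem_ker, DirectSum.component.of, dif_neg hb]
  obtain ⟨u, hu⟩ := h1
  have hu0 : u = 0 := by
    have := hle h2
    rw [LinearMap.mem_ker, ← hu, DirectSum.component.lof_self] at this
    exact this
  have hx0 : Φl x = 0 := by rw [← hu, hu0, map_zero]
  exact (PhiEquiv ι M hcover hdisj hM).map_eq_zero_iff.mp hx0

include hcover hdisj hM in
lemma orbit_top : (⨆ a : ι, orbitSpan (M a)) = ⊤ := by
  rw [eq_top_iff]
  intro z _
  have hz : sigma ι M (Phi ι M hcover hdisj z) = z :=
    LinearMap.ext_iff.mp (sigma_Phi ι M hcover hdisj) z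
  rw [← hz]
  generalize Phi ι M hcover hdisj z = q
  induction q using DirectSum.induction_on with
  | zero => simp only [map_zero]; exact Submodule.zero_mem _
  | of a x =>
    obtain ⟨p, rfl⟩ := Submodule.Quotient.mk_surjective _ x
    rw [← DirectSum.lof_eq_of L, sigma_lof]
    refine Submodule.mem_iSup_of_mem a ?_
    exact Submodule.smul_mem _ p (Submodule.subset_span
      ⟨M a, 0, ⟨((shiftFunctorZero C ℤ).app (M a)).symm⟩, rfl⟩)
  | add x y hx hy =>
    rw [map_add]
    exact Submodule.add_mem _ hx hy

end Orbits

/-- for a family of representatives `M a` of the shift orbits of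
indecomposables, each `A_O` is isomorphic to `ℤ[t,t⁻¹]` (infinite orbit) or to
`ℤ[t,t⁻¹]/(tⁿ − 1)` (orbit of size `n`), and `A(C)^t` is the (internal) direct
sum of the `A_O`. -/
theorem stmt8 (hKS : KrullSchmidt (C := C))
    (ι : Type) (M : ι → C) (hM : ∀ a, Indec (M a))
    (hcover : ∀ N : C, Indec N → ∃ (a : ι) (j : ℤ), Nonempty (N ≅ (M a)⟦j⟧))
    (hdisj : ∀ a b : ι, (∃ j : ℤ, Nonempty (M a ≅ (M b)⟦j⟧)) → a = b) :
    (∀ a : ι, (∀ i j : ℤ, Nonempty ((M a)⟦i⟧ ≅ (M a)⟦j⟧) → i = j) →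
      Nonempty (orbitSpan (M a) ≃ₗ[L] L)) ∧
    (∀ (a : ι) (n : ℕ), 0 < n → Nonempty ((M a)⟦(n : ℤ)⟧ ≅ M a) →
      (∀ j : ℤ, 0 < j → j < n → ¬ Nonempty ((M a)⟦j⟧ ≅ M a)) →
      Nonempty (orbitSpan (M a) ≃ₗ[L]
        (L ⧸ Ideal.span {(LaurentPolynomial.T (n : ℤ) - 1 : L)}))) ∧
    iSupIndep (fun a : ι => orbitSpan (M a)) ∧
    (⨆ a : ι, orbitSpan (M a)) = ⊤ := by
  refine ⟨?_, ?_, orbit_indep ι M hcover hdisj hM, orbit_top ι M hcover hdisj hM⟩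
  · intro a horb
    exact ⟨(orbitEquiv ι M hcover hdisj hM a) ≪≫ₗ
      Submodule.quotEquivOfEqBot _ (Jdl_eq_bot ι M a horb)⟩
  · intro a n hn0 hn hno
    exact ⟨(orbitEquiv ι M hcover hdisj hM a) ≪≫ₗ
      Submodule.quotEquivOfEq _ _ (Jdl_eq_span ι M a n hn0 hn hno)⟩
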